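/- Let P be a natural unit interval order on [n] and fix N ≥ 1. Then the chromatic quasisymmetric polynomial X_{inc(P)}(x_1,…,x_N;t) is a symmetric polynomial in x_1,…,x_N: for every permutation τ of [N] and every j ≥ 0, the coefficient of t^j in X_{inc(P)}(x_1,…,x_N;t) is invariant under the substitution x_i ↦ x_{τ(i)}. -/

import Mathlib

open scoped Classical

/-- Two elements are incomparable with respect to a strict order relation `lt`. -/
def Incomp {n : ℕ} (lt : Fin n → Fin n → Prop) (a b : Fin n) : Prop :=
  a ≠ b ∧ ¬ lt a b ∧ ¬ lt b a

/-- A natural unit interval order on `[n]` (modeled on `Fin n`): a strict partial order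
`lt` such that (i) `x <_P y` implies `x < y` in the natural order, and (ii) whenever
`x <_P z` and `y` is `P`-incomparable to both `x` and `z`, then `x < y < z` in the
natural order.  (Irreflexivity and asymmetry follow from condition (i).) -/
structure NUIO (n : ℕ) where
  lt : Fin n → Fin n → Prop
  trans : ∀ a b c, lt a b → lt b c → lt a c
  natural : ∀ a b, lt a b → (a : ℕ) < (b : ℕ)
  unit : ∀ x y z, lt x z → Incomp lt x y → Incomp lt y z →
    (x : ℕ) < (y : ℕ) ∧ (y : ℕ) < (z : ℕ)

/-- `inv_G(σ)` where `G` is the incomparability graph of the relation `lt`: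
the number of pairs `i < j` with `σ(i) > σ(j)` and `{σ(i), σ(j)}` an edge of `G`. -/
noncomputable def invInc {n : ℕ} (lt : Fin n → Fin n → Prop) (σ : Equiv.Perm (Fin n)) : ℕ :=
  (Finset.univ.filter fun p : Fin n × Fin n =>
    p.1 < p.2 ∧ (σ p.2 : ℕ) < (σ p.1 : ℕ) ∧ Incomp lt (σ p.1) (σ p.2)).card

/-- `maj_P(σ)`: the sum of the (1-based) positions `i` with `σ(i) >_P σ(i+1)`. -/
noncomputable def majP {n : ℕ} (lt : Fin n → Fin n → Prop) (σ : Equiv.Perm (Fin n)) : ℕ :=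
  ∑ j ∈ Finset.range n,
    if h : j + 1 < n then
      (if lt (σ ⟨j + 1, h⟩) (σ ⟨j, Nat.lt_of_succ_lt h⟩) then j + 1 else 0)
    else 0

/-- The number of edges of the incomparability graph of the relation `lt`. -/
noncomputable def numIncEdges {n : ℕ} (lt : Fin n → Fin n → Prop) : ℕ :=
  (Finset.univ.filter fun p : Fin n × Fin n => p.1 < p.2 ∧ Incomp lt p.1 p.2).card

/-- The ascent number of a coloring `c` of the incomparability graph of `lt`:
the number of edges `{i,j}` with `i < j` and `c i < c j`. -/
noncomputable def ascC {n N : ℕ} (lt : Fin n → Fin n → Prop) (c : Fin n → Fin N) : ℕ :=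
  (Finset.univ.filter fun p : Fin n × Fin n =>
    p.1 < p.2 ∧ Incomp lt p.1 p.2 ∧ (c p.1 : ℕ) < (c p.2 : ℕ)).card

/-- The chromatic quasisymmetric polynomial `X_G(x_1,…,x_N;t)` of the incomparability
graph `G` of `lt`, as a polynomial in `t` over `ℤ[x_1,…,x_N]`. -/
noncomputable def chromIncQSym (N n : ℕ) (lt : Fin n → Fin n → Prop) :
    Polynomial (MvPolynomial (Fin N) ℤ) :=
  ∑ c ∈ Finset.univ.filter (fun c : Fin n → Fin N =>
      ∀ a b : Fin n, Incomp lt a b → c a ≠ c b),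
    Polynomial.X ^ ascC lt c * Polynomial.C (∏ i, MvPolynomial.X (c i))

namespace ChromAux
open Finset
variable {n : ℕ}


lemma incomp_symm {lt : Fin n → Fin n → Prop} {a b : Fin n} (h : Incomp lt a b) :
    Incomp lt b a := ⟨h.1.symm, h.2.2, h.2.1⟩

/-- Interval property of a NUIO. -/
lemma nuio_between (P : NUIO n) {x y z : Fin n} (hxy : x < y) (hyz : y < z)
    (h : Incomp P.lt x z) : Incomp P.lt x y ∧ Incomp P.lt y z := by
  obtain ⟨hne, hxz, hzx⟩ := h
  have hxy' : (x : ℕ) < y := hxy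
  have hyz' : (y : ℕ) < z := hyz
  have hyx : ¬ P.lt y x := fun h' => absurd (P.natural _ _ h') (by omega)
  have hzy : ¬ P.lt z y := fun h' => absurd (P.natural _ _ h') (by omega)
  have h1 : ¬ P.lt x y := by
    intro h'
    have hyznc : Incomp P.lt y z := by
      refine ⟨fun he => (by omega : False) , fun h'' => hxz (P.trans _ _ _ h' h''), hzy⟩
    have := P.unit x z y h' ⟨hne, hxz, hzx⟩ (incomp_symm hyznc)
    omega
  have h2 : ¬ P.lt y z := by
    intro h'
    have hxync : Incomp P.lt x y := ⟨fun he => (by omega : False), h1, hyx⟩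
    have := P.unit y x z h' (incomp_symm hxync) ⟨hne, hxz, hzx⟩
    omega
  exact ⟨⟨fun he => (by omega : False), h1, hyx⟩, ⟨fun he => (by omega : False), h2, hzy⟩⟩

def Adj (lt : Fin n → Fin n → Prop) (S : Finset (Fin n)) (a b : Fin n) : Prop :=
  Incomp lt a b ∧ a ∈ S ∧ b ∈ S

def Rel (lt : Fin n → Fin n → Prop) (S : Finset (Fin n)) : Fin n → Fin n → Prop :=
  Relation.ReflTransGen (Adj lt S)

variable {lt : Fin n → Fin n → Prop} {S : Finset (Fin n)}

lemma adj_symm {a b : Fin n} (h : Adj lt S a b) : Adj lt S b a :=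
  ⟨⟨h.1.1.symm, h.1.2.2, h.1.2.1⟩, h.2.2, h.2.1⟩

lemma rel_refl (a : Fin n) : Rel lt S a a := Relation.ReflTransGen.refl

lemma rel_trans {a b c : Fin n} (h : Rel lt S a b) (h' : Rel lt S b c) : Rel lt S a c :=
  Relation.ReflTransGen.trans h h'

lemma rel_symm {a b : Fin n} (h : Rel lt S a b) : Rel lt S b a :=
  by
    induction h with
    | refl => exact Relation.ReflTransGen.refl
    | tail _ hadj ih => exact Relation.ReflTransGen.head (adj_symm hadj) ih

lemma rel_single {a b : Fin n} (h : Adj lt S a b) : Rel lt S a b :=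
  Relation.ReflTransGen.single h

lemma mem_S_of_rel {a b : Fin n} (ha : a ∈ S) (h : Rel lt S a b) : b ∈ S := by
  rcases (Relation.ReflTransGen.cases_tail h) with h' | ⟨c, _, hc⟩
  · exact h' ▸ ha
  · exact hc.2.2

/-- generic invariant along components -/
lemma rel_invariant {α : Sort*} {f : Fin n → α} (hf : ∀ a b, Adj lt S a b → f a = f b)
    {v w : Fin n} (h : Rel lt S v w) : f v = f w := by
  induction h with
  | refl => rfl
  | tail _ hadj ih => exact ih.trans (hf _ _ hadj)

def pos (S : Finset (Fin n)) (v : Fin n) : ℕ := (S.filter (fun u => u < v)).card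

lemma pos_lt_pos {u v : Fin n} (hu : u ∈ S) (huv : u < v) : pos S u < pos S v := by
  apply Finset.card_lt_card
  constructor
  · intro x hx
    simp only [mem_filter] at hx ⊢
    exact ⟨hx.1, lt_trans hx.2 huv⟩
  · intro hsub
    have : u ∈ S.filter (fun x => x < v) := by simp [hu, huv]
    have := hsub this
    simp at this

lemma pos_injOn {u v : Fin n} (hu : u ∈ S) (hv : v ∈ S) (h : pos S u = pos S v) : u = v := by
  rcases lt_trichotomy u v with h' | h' | h'
  · exact absurd h (Nat.ne_of_lt (pos_lt_pos hu h'))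
  · exact h'
  · exact absurd h.symm (Nat.ne_of_lt (pos_lt_pos hv h'))

lemma pos_lt_iff {u v : Fin n} (hu : u ∈ S) (hv : v ∈ S) : u < v ↔ pos S u < pos S v := by
  constructor
  · exact pos_lt_pos hu
  · intro h
    rcases lt_trichotomy u v with h' | h' | h'
    · exact h'
    · subst h'; omega
    · exact absurd (pos_lt_pos hv h') (by omega)

noncomputable def comp (lt : Fin n → Fin n → Prop) (S : Finset (Fin n)) (v : Fin n) :
    Finset (Fin n) := univ.filter (fun w => Rel lt S v w)

lemma self_mem_comp {v : Fin n} : v ∈ comp lt S v := by simp [comp, rel_refl]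

lemma mem_comp_iff {v w : Fin n} : w ∈ comp lt S v ↔ Rel lt S v w := by simp [comp]

lemma comp_eq_of_rel {v w : Fin n} (h : Rel lt S v w) : comp lt S v = comp lt S w := by
  ext x
  simp only [mem_comp_iff]
  exact ⟨fun h' => rel_trans (rel_symm h) h', fun h' => rel_trans h h'⟩

noncomputable def pm (lt : Fin n → Fin n → Prop) (S : Finset (Fin n)) (v : Fin n) : ℕ :=
  ((comp lt S v).image (pos S)).min' ⟨pos S v, mem_image_of_mem _ self_mem_comp⟩

noncomputable def qm (lt : Fin n → Fin n → Prop) (S : Finset (Fin n)) (v : Fin n) : ℕ :=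
  ((comp lt S v).image (pos S)).max' ⟨pos S v, mem_image_of_mem _ self_mem_comp⟩

lemma pm_le_pos {v : Fin n} : pm lt S v ≤ pos S v :=
  Finset.min'_le _ _ (mem_image_of_mem _ self_mem_comp)

lemma pos_le_qm {v : Fin n} : pos S v ≤ qm lt S v :=
  Finset.le_max' _ _ (mem_image_of_mem _ self_mem_comp)

lemma pm_eq_of_rel {v w : Fin n} (h : Rel lt S v w) : pm lt S v = pm lt S w := by
  unfold pm; congr 1; rw [comp_eq_of_rel h]

lemma qm_eq_of_rel {v w : Fin n} (h : Rel lt S v w) : qm lt S v = qm lt S w := by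
  unfold qm; congr 1; rw [comp_eq_of_rel h]

lemma pm_le_of_mem {v w : Fin n} (h : Rel lt S v w) : pm lt S v ≤ pos S w :=
  Finset.min'_le _ _ (mem_image_of_mem _ (mem_comp_iff.2 h))

lemma le_qm_of_mem {v w : Fin n} (h : Rel lt S v w) : pos S w ≤ qm lt S v :=
  Finset.le_max' _ _ (mem_image_of_mem _ (mem_comp_iff.2 h))

lemma exists_pos_eq_pm (v : Fin n) : ∃ w, Rel lt S v w ∧ pos S w = pm lt S v := by
  have := Finset.min'_mem ((comp lt S v).image (pos S))
    ⟨pos S v, mem_image_of_mem _ self_mem_comp⟩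
  rw [Finset.mem_image] at this
  obtain ⟨w, hw, hw'⟩ := this
  exact ⟨w, mem_comp_iff.1 hw, hw'⟩

lemma exists_pos_eq_qm (v : Fin n) : ∃ w, Rel lt S v w ∧ pos S w = qm lt S v := by
  have := Finset.max'_mem ((comp lt S v).image (pos S))
    ⟨pos S v, mem_image_of_mem _ self_mem_comp⟩
  rw [Finset.mem_image] at this
  obtain ⟨w, hw, hw'⟩ := this
  exact ⟨w, mem_comp_iff.1 hw, hw'⟩


section Step

lemma step_pos (hstep : ∀ a b, Adj lt S a b → a < b → pos S b = pos S a + 1) {a b : Fin n} (h : Adj lt S a b) :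
    pos S b = pos S a + 1 ∨ pos S a = pos S b + 1 := by
  rcases lt_trichotomy a b with h' | h' | h'
  · exact Or.inl (hstep a b h h')
  · exact absurd h' h.1.1
  · exact Or.inr (hstep b a (adj_symm h) h')

/-- discrete intermediate value along a component -/
lemma ivt (hstep : ∀ a b, Adj lt S a b → a < b → pos S b = pos S a + 1) {v w : Fin n} (hrel : Rel lt S v w) (hv : v ∈ S) (m : ℕ)
    (hm : (pos S v ≤ m ∧ m ≤ pos S w) ∨ (pos S w ≤ m ∧ m ≤ pos S v)) :
    ∃ u, Rel lt S v u ∧ u ∈ S ∧ pos S u = m := by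
  induction hrel with
  | refl => exact ⟨v, rel_refl v, hv, by omega⟩
  | @tail b w' hvb hadj ih =>
      by_cases hmw : m = pos S w'
      · exact ⟨w', Relation.ReflTransGen.tail hvb hadj, hadj.2.2, hmw.symm⟩
      · rcases step_pos hstep hadj with h' | h' <;>
          exact ih (by omega)

/-- consecutive positions within a component are adjacent in the graph -/
lemma crossing (hstep : ∀ a b, Adj lt S a b → a < b → pos S b = pos S a + 1) {v w : Fin n} (hrel : Rel lt S v w) {u u' : Fin n}
    (hu : u ∈ S) (hu' : u' ∈ S) (hpos : pos S u' = pos S u + 1)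
    (h1 : pos S v ≤ pos S u) (h2 : pos S u' ≤ pos S w) : Incomp lt u u' := by
  induction hrel with
  | refl => omega
  | @tail b w' hvb hadj ih =>
      rcases step_pos hstep hadj with h' | h'
      · by_cases hcase : pos S u' ≤ pos S b
        · exact ih hcase
        · have h3 : u' = w' := pos_injOn hu' hadj.2.2 (by omega)
          have h4 : u = b := pos_injOn hu hadj.2.1 (by omega)
          subst h3; subst h4; exact hadj.1
      · exact ih (by omega)

end Step

noncomputable def gmap (lt : Fin n → Fin n → Prop) (S : Finset (Fin n)) (u : Fin n) : Fin n :=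
  if _ : u ∈ S then
    (if h : ∃ w, w ∈ S ∧ pos S w = pm lt S u + qm lt S u - pos S u then h.choose else u)
  else u

lemma gmap_not_mem {u : Fin n} (hu : u ∉ S) : gmap lt S u = u := by
  simp [gmap, hu]

lemma gmap_spec (hstep : ∀ a b, Adj lt S a b → a < b → pos S b = pos S a + 1)
    {u : Fin n} (hu : u ∈ S) :
    gmap lt S u ∈ S ∧ Rel lt S u (gmap lt S u) ∧
      pos S (gmap lt S u) = pm lt S u + qm lt S u - pos S u := by
  obtain ⟨vp, hvp, hvp'⟩ := exists_pos_eq_pm (lt := lt) (S := S) u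
  obtain ⟨vq, hvq, hvq'⟩ := exists_pos_eq_qm (lt := lt) (S := S) u
  have hvpS : vp ∈ S := mem_S_of_rel hu hvp
  have hp1 : pm lt S u ≤ pos S u := pm_le_pos
  have hq1 : pos S u ≤ qm lt S u := pos_le_qm
  obtain ⟨w, hw1, hw2, hw3⟩ := ivt hstep (rel_trans (rel_symm hvp) hvq) hvpS
    (pm lt S u + qm lt S u - pos S u) (by omega)
  have hex : ∃ w, w ∈ S ∧ pos S w = pm lt S u + qm lt S u - pos S u := ⟨w, hw2, hw3⟩
  have hg : gmap lt S u = hex.choose := by simp [gmap, hu, hex]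
  obtain ⟨hc1, hc2⟩ := hex.choose_spec
  have : hex.choose = w := pos_injOn hc1 hw2 (by omega)
  rw [hg, this]
  exact ⟨hw2, rel_trans hvp hw1, hw3⟩


section Coloring

variable {N : ℕ} (P : NUIO n) (c : Fin n → Fin N) (k k' : Fin N)

def Sfin : Finset (Fin n) := univ.filter (fun v => c v = k ∨ c v = k')

variable {P c k k'}

lemma mem_Sfin {v : Fin n} : v ∈ Sfin c k k' ↔ (c v = k ∨ c v = k') := by
  simp [Sfin]

/-- edges of the bicolored induced subgraph join S-consecutive vertices -/
lemma hstep_proper (hk' : (k' : ℕ) = (k : ℕ) + 1)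
    (hc : ∀ a b, Incomp P.lt a b → c a ≠ c b) :
    ∀ a b, Adj P.lt (Sfin c k k') a b → a < b →
      pos (Sfin c k k') b = pos (Sfin c k k') a + 1 := by
  intro a b ⟨hinc, ha, hb⟩ hab
  have key : (Sfin c k k').filter (fun u => u < b)
      = insert a ((Sfin c k k').filter (fun u => u < a)) := by
    ext x
    simp only [mem_filter, mem_insert]
    constructor
    · rintro ⟨hxS, hxb⟩
      rcases lt_trichotomy x a with h' | h' | h'
      · exact Or.inr ⟨hxS, h'⟩
      · exact Or.inl h'
      · exfalso
        obtain ⟨hax, hxb'⟩ := nuio_between P h' hxb hinc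
        have h1 := hc _ _ hax
        have h2 := hc _ _ hxb'
        have h3 := hc _ _ hinc
        rw [mem_Sfin] at ha hb hxS
        rcases ha with h4 | h4 <;> rcases hb with h5 | h5 <;>
          rcases hxS with h6 | h6 <;> simp_all
    · rintro (h' | ⟨hxS, hxa⟩)
      · subst h'; exact ⟨ha, hab⟩
      · exact ⟨hxS, lt_trans hxa hab⟩
  unfold pos
  rw [key, Finset.card_insert_of_notMem (by simp)]

def col (u : Fin n) : ℕ := if c u = k then 0 else 1

lemma col_le_one {u : Fin n} : col (c := c) (k := k) u ≤ 1 := by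
  unfold col; split <;> omega

lemma col_ne_of_c_ne {u v : Fin n} (hu : u ∈ Sfin c k k') (hv : v ∈ Sfin c k k')
    (h : c u ≠ c v) : col (c := c) (k := k) u ≠ col (c := c) (k := k) v := by
  rw [mem_Sfin] at hu hv
  unfold col
  split <;> split <;> simp_all

lemma c_eq_of_col_eq {u v : Fin n} (hu : u ∈ Sfin c k k') (hv : v ∈ Sfin c k k')
    (h : col (c := c) (k := k) u = col (c := c) (k := k) v) : c u = c v := by
  rw [mem_Sfin] at hu hv
  unfold col at h
  split at h <;> split at h <;> simp_all

lemma parity_invariant (hk' : (k' : ℕ) = (k : ℕ) + 1)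
    (hc : ∀ a b, Incomp P.lt a b → c a ≠ c b) {v w : Fin n}
    (h : Rel P.lt (Sfin c k k') v w) :
    (pos (Sfin c k k') v + col (c := c) (k := k) v) % 2
      = (pos (Sfin c k k') w + col (c := c) (k := k) w) % 2 := by
  refine rel_invariant (f := fun u => (pos (Sfin c k k') u + col (c := c) (k := k) u) % 2)
    ?_ h
  intro a b hadj
  have hcol := col_ne_of_c_ne hadj.2.1 hadj.2.2 (hc _ _ hadj.1)
  have h1 : col (c := c) (k := k) a ≤ 1 := col_le_one
  have h2 : col (c := c) (k := k) b ≤ 1 := col_le_one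
  rcases step_pos (hstep_proper hk' hc) hadj with h' | h' <;> omega

/-- vertices in the same component whose positions have different parity get
different colors -/
lemma c_ne_of_parity_ne (hk' : (k' : ℕ) = (k : ℕ) + 1)
    (hc : ∀ a b, Incomp P.lt a b → c a ≠ c b) {v w : Fin n}
    (hv : v ∈ Sfin c k k') (hw : w ∈ Sfin c k k')
    (h : Rel P.lt (Sfin c k k') v w)
    (hpar : pos (Sfin c k k') v % 2 ≠ pos (Sfin c k k') w % 2) : c v ≠ c w := by
  intro he
  have hinv := parity_invariant hk' hc h
  have : col (c := c) (k := k) v = col (c := c) (k := k) w := by unfold col; rw [he]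
  have h1 : col (c := c) (k := k) v ≤ 1 := col_le_one
  have h2 : col (c := c) (k := k) w ≤ 1 := col_le_one
  omega

end Coloring


section Psi

variable {N : ℕ} {P : NUIO n} {c : Fin n → Fin N} {k k' : Fin N}

/-- the reflection map of a coloring -/
noncomputable def Psi (P : NUIO n) (c : Fin n → Fin N) (k k' : Fin N) : Fin n → Fin N :=
  fun v => Equiv.swap k k' (c (gmap P.lt (Sfin c k k') v))

lemma swap_other {x y : Fin N} (hx : x = k ∨ x = k') (hy : y = k ∨ y = k') (hxy : x ≠ y) :
    Equiv.swap k k' x = y := by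
  rcases hx with h | h <;> rcases hy with h' | h' <;>
    simp_all [Equiv.swap_apply_left, Equiv.swap_apply_right]

lemma swap_mem_pair {x : Fin N} (hx : x = k ∨ x = k') :
    Equiv.swap k k' x = k ∨ Equiv.swap k k' x = k' := by
  rcases hx with h | h <;>
    simp_all [Equiv.swap_apply_left, Equiv.swap_apply_right]

lemma swap_not_mem_pair {x : Fin N} (hx1 : x ≠ k) (hx2 : x ≠ k') :
    Equiv.swap k k' x = x := Equiv.swap_apply_of_ne_of_ne hx1 hx2

section Proper

variable (hk' : (k' : ℕ) = (k : ℕ) + 1) (hc : ∀ a b, Incomp P.lt a b → c a ≠ c b)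

include hk' hc

lemma g_spec' {u : Fin n} (hu : u ∈ Sfin c k k') :
    gmap P.lt (Sfin c k k') u ∈ Sfin c k k' ∧
      Rel P.lt (Sfin c k k') u (gmap P.lt (Sfin c k k') u) ∧
      pos (Sfin c k k') (gmap P.lt (Sfin c k k') u)
        = pm P.lt (Sfin c k k') u + qm P.lt (Sfin c k k') u - pos (Sfin c k k') u :=
  gmap_spec (hstep_proper hk' hc) hu

lemma g_invol (u : Fin n) :
    gmap P.lt (Sfin c k k') (gmap P.lt (Sfin c k k') u) = u := by
  by_cases hu : u ∈ Sfin c k k'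
  · obtain ⟨h1, h2, h3⟩ := g_spec' hk' hc hu
    obtain ⟨h4, h5, h6⟩ := g_spec' hk' hc h1
    have e1 : pm P.lt (Sfin c k k') (gmap P.lt (Sfin c k k') u) = pm P.lt (Sfin c k k') u :=
      (pm_eq_of_rel h2).symm
    have e2 : qm P.lt (Sfin c k k') (gmap P.lt (Sfin c k k') u) = qm P.lt (Sfin c k k') u :=
      (qm_eq_of_rel h2).symm
    have b1 : pm P.lt (Sfin c k k') u ≤ pos (Sfin c k k') u := pm_le_pos
    have b2 : pos (Sfin c k k') u ≤ qm P.lt (Sfin c k k') u := pos_le_qm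
    have b3 : pm P.lt (Sfin c k k') u ≤ pos (Sfin c k k') (gmap P.lt (Sfin c k k') u) := by omega
    exact pos_injOn h4 hu (by omega)
  · rw [gmap_not_mem hu, gmap_not_mem hu]

/-- properties of `g` on an edge inside `S` -/
lemma g_adj {a b : Fin n} (hadj : Adj P.lt (Sfin c k k') a b) (hab : a < b) :
    gmap P.lt (Sfin c k k') b < gmap P.lt (Sfin c k k') a ∧
    Incomp P.lt (gmap P.lt (Sfin c k k') b) (gmap P.lt (Sfin c k k') a) ∧
    c (gmap P.lt (Sfin c k k') a) ≠ c (gmap P.lt (Sfin c k k') b) := by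
  obtain ⟨ha1, ha2, ha3⟩ := g_spec' hk' hc hadj.2.1
  obtain ⟨hb1, hb2, hb3⟩ := g_spec' hk' hc hadj.2.2
  have hrel : Rel P.lt (Sfin c k k') a b := rel_single hadj
  have e1 : pm P.lt (Sfin c k k') b = pm P.lt (Sfin c k k') a := (pm_eq_of_rel hrel).symm
  have e2 : qm P.lt (Sfin c k k') b = qm P.lt (Sfin c k k') a := (qm_eq_of_rel hrel).symm
  have hstepv : pos (Sfin c k k') b = pos (Sfin c k k') a + 1 :=
    hstep_proper hk' hc a b hadj hab
  have b1 : pm P.lt (Sfin c k k') a ≤ pos (Sfin c k k') a := pm_le_pos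
  have b2 : pos (Sfin c k k') a ≤ qm P.lt (Sfin c k k') a := pos_le_qm
  have b3 : pm P.lt (Sfin c k k') b ≤ pos (Sfin c k k') b := pm_le_pos
  have b4 : pos (Sfin c k k') b ≤ qm P.lt (Sfin c k k') b := pos_le_qm
  have hpos : pos (Sfin c k k') (gmap P.lt (Sfin c k k') a)
      = pos (Sfin c k k') (gmap P.lt (Sfin c k k') b) + 1 := by omega
  have hrelg : Rel P.lt (Sfin c k k') (gmap P.lt (Sfin c k k') b)
      (gmap P.lt (Sfin c k k') a) :=
    rel_trans (rel_symm hb2) (rel_trans (rel_symm hrel) ha2)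
  refine ⟨?_, ?_, ?_⟩
  · exact (pos_lt_iff hb1 ha1).2 (by omega)
  · exact crossing (hstep_proper hk' hc) hrelg hb1 ha1 hpos le_rfl le_rfl
  · exact c_ne_of_parity_ne hk' hc ha1 hb1 (rel_symm hrelg) (by omega)

lemma psi_mem {u : Fin n} (hu : u ∈ Sfin c k k') :
    Psi P c k k' u = k ∨ Psi P c k k' u = k' :=
  swap_mem_pair (mem_Sfin.1 (g_spec' hk' hc hu).1)

lemma psi_not_mem {u : Fin n} (hu : u ∉ Sfin c k k') : Psi P c k k' u = c u := by
  unfold Psi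
  rw [gmap_not_mem hu]
  rw [mem_Sfin] at hu
  push_neg at hu
  exact swap_not_mem_pair hu.1 hu.2

lemma Sfin_psi : Sfin (Psi P c k k') k k' = Sfin c k k' := by
  ext v
  rw [mem_Sfin, mem_Sfin]
  by_cases hv : v ∈ Sfin c k k'
  · simp only [mem_Sfin.1 hv, iff_true]
    exact psi_mem hk' hc hv
  · rw [psi_not_mem hk' hc hv]

lemma psi_proper : ∀ a b, Incomp P.lt a b → Psi P c k k' a ≠ Psi P c k k' b := by
  intro a b hinc
  by_cases ha : a ∈ Sfin c k k' <;> by_cases hb : b ∈ Sfin c k k'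
  · -- both in S
    have hadj : Adj P.lt (Sfin c k k') a b := ⟨hinc, ha, hb⟩
    rcases lt_trichotomy a b with h' | h' | h'
    · have := (g_adj hk' hc hadj h').2.2
      exact fun he => this (Equiv.injective _ he)
    · exact absurd h' hinc.1
    · have := (g_adj hk' hc (adj_symm hadj) h').2.2
      exact fun he => this (Equiv.injective _ he).symm
  · have h1 := psi_mem hk' hc ha
    have h2 := psi_not_mem hk' hc hb
    rw [mem_Sfin] at hb
    push_neg at hb
    intro he
    rcases h1 with h | h <;> rw [h2] at he <;> simp_all
  · have h1 := psi_mem hk' hc hb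
    have h2 := psi_not_mem hk' hc ha
    rw [mem_Sfin] at ha
    push_neg at ha
    intro he
    rcases h1 with h | h <;> rw [h2] at he <;> simp_all
  · rw [psi_not_mem hk' hc ha, psi_not_mem hk' hc hb]
    exact hc a b hinc

lemma psi_psi : Psi P (Psi P c k k') k k' = c := by
  funext v
  have hS : Sfin (Psi P c k k') k k' = Sfin c k k' := Sfin_psi hk' hc
  show Equiv.swap k k' (Psi P c k k' (gmap P.lt (Sfin (Psi P c k k') k k') v)) = c v
  rw [hS]
  show Equiv.swap k k'
    (Equiv.swap k k' (c (gmap P.lt (Sfin c k k') (gmap P.lt (Sfin c k k') v)))) = c v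
  rw [g_invol hk' hc, Equiv.swap_apply_self]

end Proper

end Psi


section Asc

variable {N : ℕ} {P : NUIO n} {c : Fin n → Fin N} {k k' : Fin N}

noncomputable def ascFilter (lt : Fin n → Fin n → Prop) (c : Fin n → Fin N) :
    Finset (Fin n × Fin n) :=
  Finset.univ.filter fun p : Fin n × Fin n =>
    p.1 < p.2 ∧ Incomp lt p.1 p.2 ∧ (c p.1 : ℕ) < (c p.2 : ℕ)

noncomputable def Phi (P : NUIO n) (c : Fin n → Fin N) (k k' : Fin N) :
    Fin n × Fin n → Fin n × Fin n := fun p =>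
  if p.1 ∈ Sfin c k k' ∧ p.2 ∈ Sfin c k k' then
    (gmap P.lt (Sfin c k k') p.2, gmap P.lt (Sfin c k k') p.1) else p

variable (hk' : (k' : ℕ) = (k : ℕ) + 1) (hc : ∀ a b, Incomp P.lt a b → c a ≠ c b)

include hk' hc

lemma phi_psi_eq : Phi P (Psi P c k k') k k' = Phi P c k k' := by
  unfold Phi
  rw [Sfin_psi hk' hc]

lemma phi_phi : ∀ p, Phi P c k k' (Phi P c k k' p) = p := by
  rintro ⟨a, b⟩
  by_cases h : a ∈ Sfin c k k' ∧ b ∈ Sfin c k k'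
  · have hga := (g_spec' hk' hc h.1).1
    have hgb := (g_spec' hk' hc h.2).1
    simp only [Phi, h, and_self, if_true, hga, hgb, if_pos (And.intro hgb hga)]
    rw [g_invol hk' hc, g_invol hk' hc]
  · simp only [Phi, if_neg h]

lemma val_cross {x y d : Fin N} (hx : x = k ∨ x = k') (hy : y = k ∨ y = k')
    (hd1 : d ≠ k) (hd2 : d ≠ k') :
    (((x : ℕ) < d ↔ (y : ℕ) < d) ∧ ((d : ℕ) < x ↔ (d : ℕ) < y)) := by
  have h1 : (x : ℕ) = k ∨ (x : ℕ) = (k : ℕ) + 1 := by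
    rcases hx with h | h <;> simp [h, hk']
  have h2 : (y : ℕ) = k ∨ (y : ℕ) = (k : ℕ) + 1 := by
    rcases hy with h | h <;> simp [h, hk']
  have h3 : (d : ℕ) ≠ k := fun he => hd1 (Fin.ext he)
  have h4 : (d : ℕ) ≠ (k : ℕ) + 1 := fun he => hd2 (Fin.ext (by rw [he, hk']))
  omega

lemma phi_maps : ∀ p ∈ ascFilter P.lt (Psi P c k k'), Phi P c k k' p ∈ ascFilter P.lt c := by
  rintro ⟨a, b⟩ hp
  simp only [ascFilter, mem_filter, mem_univ, true_and] at hp ⊢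
  obtain ⟨hab, hinc, hasc⟩ := hp
  by_cases h : a ∈ Sfin c k k' ∧ b ∈ Sfin c k k'
  · have hadj : Adj P.lt (Sfin c k k') a b := ⟨hinc, h.1, h.2⟩
    obtain ⟨hg1, hg2, hg3⟩ := g_adj hk' hc hadj hab
    have hgaS := (g_spec' hk' hc h.1).1
    have hgbS := (g_spec' hk' hc h.2).1
    have ea : Psi P c k k' a = c (gmap P.lt (Sfin c k k') b) :=
      swap_other (mem_Sfin.1 hgaS) (mem_Sfin.1 hgbS) hg3
    have eb : Psi P c k k' b = c (gmap P.lt (Sfin c k k') a) :=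
      swap_other (mem_Sfin.1 hgbS) (mem_Sfin.1 hgaS) (Ne.symm hg3)
    rw [ea, eb] at hasc
    simp only [Phi, h, and_self, if_true]
    exact ⟨hg1, hg2, hasc⟩
  · simp only [Phi, if_neg h]
    refine ⟨hab, hinc, ?_⟩
    by_cases ha : a ∈ Sfin c k k' <;> by_cases hb : b ∈ Sfin c k k'
    · exact absurd ⟨ha, hb⟩ h
    · have e1 := psi_not_mem hk' hc hb
      rw [e1] at hasc
      rw [mem_Sfin] at hb; push_neg at hb
      exact ((val_cross hk' hc (psi_mem hk' hc ha) (mem_Sfin.1 ha) hb.1 hb.2).1).mp hasc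
    · have e1 := psi_not_mem hk' hc ha
      rw [e1] at hasc
      rw [mem_Sfin] at ha; push_neg at ha
      exact ((val_cross hk' hc (psi_mem hk' hc hb) (mem_Sfin.1 hb) ha.1 ha.2).2).mp hasc
    · rw [psi_not_mem hk' hc ha, psi_not_mem hk' hc hb] at hasc
      exact hasc

end Asc


section Final

variable {N : ℕ} {P : NUIO n} {c : Fin n → Fin N} {k k' : Fin N}
variable (hk' : (k' : ℕ) = (k : ℕ) + 1) (hc : ∀ a b, Incomp P.lt a b → c a ≠ c b)

include hk' hc

lemma asc_psi : ascC P.lt (Psi P c k k') = ascC P.lt c := by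
  have h1 : ascC P.lt (Psi P c k k') = (ascFilter P.lt (Psi P c k k')).card := rfl
  have h2 : ascC P.lt c = (ascFilter P.lt c).card := rfl
  rw [h1, h2]
  refine Finset.card_nbij' (Phi P c k k') (Phi P c k k') (phi_maps hk' hc) ?_ ?_ ?_
  · intro p hp
    have := phi_maps hk' (psi_proper hk' hc) (c := Psi P c k k')
      (p := p)
    rw [psi_psi hk' hc, phi_psi_eq hk' hc] at this
    exact this hp
  · intro p _; exact phi_phi hk' hc p
  · intro p _; exact phi_phi hk' hc p

lemma prod_psi :
    (∏ i, MvPolynomial.X (R := ℤ) (Psi P c k k' i))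
      = ∏ i, MvPolynomial.X (R := ℤ) (Equiv.swap k k' (c i)) := by
  have hinv : Function.Involutive (gmap P.lt (Sfin c k k')) := g_invol hk' hc
  calc (∏ i, MvPolynomial.X (R := ℤ) (Psi P c k k' i))
      = ∏ i, MvPolynomial.X (R := ℤ) (Equiv.swap k k' (c (hinv.toPerm _ i))) := rfl
    _ = ∏ i, MvPolynomial.X (R := ℤ) (Equiv.swap k k' (c i)) :=
        Equiv.prod_comp hinv.toPerm (fun v => MvPolynomial.X (Equiv.swap k k' (c v)))

end Final

/-- Invariance of each coefficient under an adjacent transposition of colors. -/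
lemma rename_swap_coeff {N : ℕ} (P : NUIO n) (k k' : Fin N) (hk' : (k' : ℕ) = (k : ℕ) + 1)
    (j : ℕ) :
    MvPolynomial.rename (Equiv.swap k k' : Fin N → Fin N) ((chromIncQSym N n P.lt).coeff j) =
      (chromIncQSym N n P.lt).coeff j := by
  have hcoeff : (chromIncQSym N n P.lt).coeff j
      = ∑ c ∈ Finset.univ.filter (fun c : Fin n → Fin N =>
          ∀ a b : Fin n, Incomp P.lt a b → c a ≠ c b),
        (if j = ascC P.lt c then (∏ i, MvPolynomial.X (R := ℤ) (c i)) else 0) := by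
    rw [chromIncQSym, Polynomial.finset_sum_coeff]
    refine Finset.sum_congr rfl fun c _ => ?_
    rw [mul_comm, Polynomial.coeff_C_mul, Polynomial.coeff_X_pow]
    split <;> simp
  rw [hcoeff, map_sum]
  have hterm : ∀ c : Fin n → Fin N,
      MvPolynomial.rename (Equiv.swap k k' : Fin N → Fin N)
        (if j = ascC P.lt c then (∏ i, MvPolynomial.X (R := ℤ) (c i)) else 0)
      = (if j = ascC P.lt c then (∏ i, MvPolynomial.X (R := ℤ) (Equiv.swap k k' (c i))) else 0) := by
    intro c
    split
    · rw [map_prod]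
      simp [MvPolynomial.rename_X]
    · rw [map_zero]
  simp only [hterm]
  refine Finset.sum_nbij' (fun c => Psi P c k k') (fun c => Psi P c k k') ?_ ?_ ?_ ?_ ?_
  · intro c hcmem
    simp only [Finset.mem_filter, Finset.mem_univ, true_and] at hcmem ⊢
    exact psi_proper hk' hcmem
  · intro c hcmem
    simp only [Finset.mem_filter, Finset.mem_univ, true_and] at hcmem ⊢
    exact psi_proper hk' hcmem
  · intro c hcmem
    simp only [Finset.mem_filter, Finset.mem_univ, true_and] at hcmem
    exact psi_psi hk' hcmem
  · intro c hcmem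
    simp only [Finset.mem_filter, Finset.mem_univ, true_and] at hcmem
    exact psi_psi hk' hcmem
  · intro c hcmem
    simp only [Finset.mem_filter, Finset.mem_univ, true_and] at hcmem
    rw [asc_psi hk' hcmem, prod_psi hk' hcmem]

end ChromAux

/-- for a natural unit interval order `P` on `[n]`, the chromatic
quasisymmetric polynomial `X_{inc(P)}(x_1,…,x_N;t)` is symmetric in `x_1,…,x_N`:
each coefficient of `t^j` is invariant under every permutation of the variables. -/
theorem chromatic_qsym_symmetric (n N : ℕ) (hN : 1 ≤ N) (P : NUIO n) :
    ∀ (τ : Equiv.Perm (Fin N)) (j : ℕ),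
      MvPolynomial.rename (τ : Fin N → Fin N) ((chromIncQSym N n P.lt).coeff j) =
        (chromIncQSym N n P.lt).coeff j := by
  intro τ j
  obtain ⟨m, rfl⟩ : ∃ m, N = m + 1 := ⟨N - 1, by omega⟩
  have hgen := Equiv.Perm.mclosure_swap_castSucc_succ m
  have hτ : τ ∈ Submonoid.closure
      (Set.range fun i : Fin m => Equiv.swap i.castSucc i.succ) := hgen ▸ Submonoid.mem_top τ
  induction hτ using Submonoid.closure_induction with
  | one =>
      simp [MvPolynomial.rename_id]
  | mem σ hσ =>
      obtain ⟨i, rfl⟩ := hσ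
      exact ChromAux.rename_swap_coeff P i.castSucc i.succ (by simp) j
  | mul σ₁ σ₂ h₁ h₂ ih₁ ih₂ =>
      have : (⇑(σ₁ * σ₂) : Fin (m+1) → Fin (m+1)) = ⇑σ₁ ∘ ⇑σ₂ := rfl
      rw [this, ← MvPolynomial.rename_rename, ih₂, ih₁]
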